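/- Let B be a k×k real skew-symmetric matrix and fix an index j. Then there exists z ∈ ℝ^k with z ≥ 0, Bz ≤ 0, and z_j − (Bz)_j > 0. -/

import Mathlib

open Finset

lemma cone_caratheodory_aux {E : Type*} [AddCommGroup E] [Module ℝ E]
    {ι : Type*} [Fintype ι] [DecidableEq ι] (v : ι → E) :
    ∀ (n : ℕ) (s : Finset ι) (c : ι → ℝ), s.card ≤ n → 0 ≤ c → (∀ i ∉ s, c i = 0) →
    ∃ (t : Finset ι) (d : ι → ℝ), 0 ≤ d ∧ (∀ i ∉ t, d i = 0) ∧
      LinearIndependent ℝ (fun i : t => v i) ∧ ∑ i, d i • v i = ∑ i, c i • v i := by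
  intro n
  induction n with
  | zero =>
    intro s c hcard hc hsupp
    refine ⟨∅, c, hc, ?_, ?_, rfl⟩
    · intro i _
      exact hsupp i (by simp [Finset.card_eq_zero.mp (Nat.le_zero.mp hcard)])
    · haveI : IsEmpty ((∅ : Finset ι) : Type _) := by
        simp only [Finset.isEmpty_coe_sort]
      exact linearIndependent_empty_type
  | succ n ih =>
    intro s c hcard hc hsupp
    by_cases hli : LinearIndependent ℝ (fun i : s => v i)
    · exact ⟨s, c, hc, hsupp, hli, rfl⟩
    obtain ⟨g, hg0, i₁, hi₁⟩ := Fintype.not_linearIndependent_iff.mp hli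
    -- extend g to ι
    set d0 : ι → ℝ := fun i => if h : i ∈ s then g ⟨i, h⟩ else 0 with hd0
    have hd0supp : ∀ i ∉ s, d0 i = 0 := fun i hi => by simp [hd0, hi]
    have hd0sum : ∑ i, d0 i • v i = 0 := by
      rw [← Finset.sum_subset (Finset.subset_univ s)
        (fun i _ hi => by rw [hd0supp i hi, zero_smul])]
      rw [← Finset.sum_attach s (fun i => d0 i • v i)]
      simpa [hd0] using hg0
    have hd0ne : ∃ i ∈ s, d0 i ≠ 0 := ⟨i₁, i₁.2, by simpa [hd0] using hi₁⟩
    -- WLOG get e with a positive entry on s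
    obtain ⟨e, hesupp, hesum, i₂, hi₂s, hi₂pos⟩ :
        ∃ e : ι → ℝ, (∀ i ∉ s, e i = 0) ∧ (∑ i, e i • v i = 0) ∧ ∃ i ∈ s, 0 < e i := by
      by_cases hpos : ∃ i ∈ s, 0 < d0 i
      · exact ⟨d0, hd0supp, hd0sum, hpos⟩
      · push_neg at hpos
        obtain ⟨i₀, hi₀s, hi₀⟩ := hd0ne
        refine ⟨-d0, fun i hi => by simp [hd0supp i hi], by simpa using hd0sum,
          i₀, hi₀s, ?_⟩
        have := hpos i₀ hi₀s
        simp only [Pi.neg_apply]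
        cases lt_or_eq_of_le this with
        | inl h => linarith
        | inr h => exact absurd h hi₀
    set T : Finset ι := s.filter (fun i => 0 < e i) with hT
    have hTne : T.Nonempty := ⟨i₂, by simp [hT, hi₂s, hi₂pos]⟩
    obtain ⟨i₀, hi₀T, hi₀min⟩ := T.exists_min_image (fun i => c i / e i) hTne
    have hi₀s : i₀ ∈ s := (Finset.mem_filter.mp hi₀T).1
    have hei₀ : 0 < e i₀ := (Finset.mem_filter.mp hi₀T).2
    set t : ℝ := c i₀ / e i₀ with ht
    have ht0 : 0 ≤ t := div_nonneg (hc i₀) hei₀.le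
    set c' : ι → ℝ := fun i => c i - t * e i with hc'
    have hc'0 : 0 ≤ c' := by
      intro i
      show (0:ℝ) ≤ c i - t * e i
      by_cases hie : 0 < e i
      · have his : i ∈ s := by
          by_contra h; rw [hesupp i h] at hie; exact lt_irrefl 0 hie
        have := hi₀min i (Finset.mem_filter.mpr ⟨his, hie⟩)
        have : t * e i ≤ c i := (le_div_iff₀ hie).mp this
        linarith
      · push_neg at hie
        have : t * e i ≤ 0 := mul_nonpos_of_nonneg_of_nonpos ht0 hie
        have h2 : (0:ℝ) ≤ c i := hc i
        linarith
    have hei₀ne : e i₀ ≠ 0 := ne_of_gt hei₀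
    have hc'supp : ∀ i ∉ s.erase i₀, c' i = 0 := by
      intro i hi
      by_cases his : i ∈ s
      · have : i = i₀ := by
          by_contra h
          exact hi (Finset.mem_erase.mpr ⟨h, his⟩)
        subst this
        simp only [hc', ht]
        field_simp
        ring
      · simp [hc', hsupp i his, hesupp i his]
    have hc'sum : ∑ i, c' i • v i = ∑ i, c i • v i := by
      simp only [hc', sub_smul, mul_smul, Finset.sum_sub_distrib]
      rw [← Finset.smul_sum, hesum, smul_zero, sub_zero]
    have hcard' : (s.erase i₀).card ≤ n := by
      have := Finset.card_erase_lt_of_mem hi₀s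
      omega
    obtain ⟨t', d, hd, hdsupp, hdli, hdsum⟩ := ih (s.erase i₀) c' hcard' hc'0 hc'supp
    exact ⟨t', d, hd, hdsupp, hdli, hdsum.trans hc'sum⟩

lemma sum_restrict_subtype {E : Type*} [AddCommGroup E] [Module ℝ E]
    {ι : Type*} [Fintype ι] [DecidableEq ι] (v : ι → E) (s : Finset ι) (c : ι → ℝ)
    (h : ∀ i ∉ s, c i = 0) :
    ∑ i, c i • v i = ∑ i : {i // i ∈ s}, c i • v (i : ι) := by
  rw [← Finset.sum_subset (Finset.subset_univ s)
    (fun i _ hi => by rw [h i hi, zero_smul])]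
  rw [← Finset.sum_attach s (fun i => c i • v i), Finset.univ_eq_attach]

lemma cone_isClosed {k : ℕ} {ι : Type*} [Fintype ι] [DecidableEq ι]
    (v : ι → EuclideanSpace ℝ (Fin k)) :
    IsClosed {x : EuclideanSpace ℝ (Fin k) | ∃ c : ι → ℝ, 0 ≤ c ∧ x = ∑ i, c i • v i} := by
  have key : {x : EuclideanSpace ℝ (Fin k) | ∃ c : ι → ℝ, 0 ≤ c ∧ x = ∑ i, c i • v i} =
      ⋃ (s : Finset ι), ⋃ (_ : LinearIndependent ℝ (fun i : s => v i)),
        (fun d : {i // i ∈ s} → ℝ => ∑ i, d i • v (i : ι)) '' {d | 0 ≤ d} := by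
    ext x
    constructor
    · rintro ⟨c, hc, rfl⟩
      obtain ⟨t, d, hd, hdsupp, hdli, hdsum⟩ :=
        cone_caratheodory_aux v (Finset.univ.card) Finset.univ c (le_refl _) hc
          (fun i hi => absurd (Finset.mem_univ i) hi)
      refine Set.mem_iUnion.mpr ⟨t, Set.mem_iUnion.mpr ⟨hdli, ?_⟩⟩
      refine ⟨fun i => d i, fun i => hd i, ?_⟩
      show ∑ i : {i // i ∈ t}, d i • v (i : ι) = _
      rw [← sum_restrict_subtype v t d hdsupp, hdsum]
    · intro hx
      obtain ⟨s, hs⟩ := Set.mem_iUnion.mp hx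
      obtain ⟨hli, d, hd, rfl⟩ := Set.mem_iUnion.mp hs
      refine ⟨fun i => if h : i ∈ s then d ⟨i, h⟩ else 0, fun i => ?_, ?_⟩
      · by_cases h : i ∈ s <;> simp [h]
        · exact hd ⟨i, h⟩
      · rw [sum_restrict_subtype v s _ (fun i hi => by simp [hi])]
        ext i
        simp [i.2]

  rw [key]
  apply isClosed_iUnion_of_finite
  intro s
  apply isClosed_iUnion_of_finite
  intro hli
  -- the map as a linear map
  let φ : ({i // i ∈ s} → ℝ) →ₗ[ℝ] EuclideanSpace ℝ (Fin k) :=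
    { toFun := fun d => ∑ i, d i • v (i : ι)
      map_add' := by intro a b; simp [add_smul, Finset.sum_add_distrib]
      map_smul' := by intro m a; simp [mul_smul, Finset.smul_sum] }
  have hker : LinearMap.ker φ = ⊥ := by
    rw [LinearMap.ker_eq_bot']
    intro g hg
    have h0 := Fintype.linearIndependent_iff.mp hli g hg
    funext i
    exact h0 i
  have hemb := LinearMap.isClosedEmbedding_of_injective hker
  have horth : IsClosed {d : {i // i ∈ s} → ℝ | 0 ≤ d} := by
    have : {d : {i // i ∈ s} → ℝ | 0 ≤ d} = ⋂ i, {d | 0 ≤ d i} := by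
      ext d; simp [Pi.le_def]
    rw [this]
    exact isClosed_iInter fun i => isClosed_le continuous_const (continuous_apply i)
  exact hemb.isClosedMap _ horth

theorem tucker_lemma_skew (k : ℕ) (B : Matrix (Fin k) (Fin k) ℝ) (hB : B = -B.transpose)
    (j : Fin k) :
    ∃ z : Fin k → ℝ, 0 ≤ z ∧ B.mulVec z ≤ 0 ∧ 0 < z j - B.mulVec z j := by
  classical
  have hB' : ∀ a b, B a b = - B b a := by
    intro a b
    conv_lhs => rw [hB]
    simp [Matrix.transpose_apply]
  set v : (Fin k ⊕ Fin k) → EuclideanSpace ℝ (Fin k) :=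
    Sum.elim (fun i => (WithLp.toLp 2 (fun l => B i l) : EuclideanSpace ℝ (Fin k)))
      (fun i => (WithLp.toLp 2 (fun l => if l = i then (-1:ℝ) else 0) : EuclideanSpace ℝ (Fin k))) with hv
  set S : Set (EuclideanSpace ℝ (Fin k)) :=
    {x | ∃ c : (Fin k ⊕ Fin k) → ℝ, 0 ≤ c ∧ x = ∑ i, c i • v i} with hS
  have sum_apply : ∀ (c : (Fin k ⊕ Fin k) → ℝ) (l : Fin k),
      (∑ i, c i • v i) l = ∑ i, c i * v i l := by
    intro c l
    rw [WithLp.ofLp_sum, Finset.sum_apply l Finset.univ (fun i => (c i • v i).ofLp)]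
    rfl
  set c₀ : EuclideanSpace ℝ (Fin k) :=
    (WithLp.toLp 2 (fun l => (if l = j then (1:ℝ) else 0) + B l j) : EuclideanSpace ℝ (Fin k)) with hc₀
  by_cases hmem : c₀ ∈ S
  · -- c₀ is in the cone: extract an explicit representation
    obtain ⟨c, hcnn, hx⟩ := hmem
    set y : Fin k → ℝ := fun i => c (Sum.inl i) with hy
    set w : Fin k → ℝ := fun i => c (Sum.inr i) with hw
    have hrel : ∀ l, (if l = j then (1:ℝ) else 0) + B l j
        = (∑ i, y i * B i l) - w l := by
      intro l
      have h1 : c₀ l = ∑ i, c i * v i l := by rw [hx]; exact sum_apply c l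
      have h2 : ∑ i, c i * v i l
          = (∑ i, y i * B i l) - w l := by
        rw [Fintype.sum_sum_type]
        congr 1
        simp [hv, hw, mul_ite]
      rw [← h2, ← h1]
    refine ⟨fun m => y m + (if m = j then 1 else 0), ?_, ?_, ?_⟩
    · intro m
      have h0 : (0:ℝ) ≤ c (Sum.inl m) := hcnn (Sum.inl m)
      show (0:ℝ) ≤ y m + (if m = j then 1 else 0)
      rcases eq_or_ne m j with hm | hm
      · subst hm; simp [hy]; linarith
      · simp [hm, hy]; linarith
    · intro l
      have hmv : B.mulVec (fun m => y m + (if m = j then 1 else 0)) l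
          = (∑ m, B l m * y m) + B l j := by
        simp [Matrix.mulVec, dotProduct, mul_add, Finset.sum_add_distrib, mul_ite]
      have hflip : ∑ m, B l m * y m = - ∑ m, y m * B m l := by
        rw [← Finset.sum_neg_distrib]
        congr 1; ext m; rw [hB' l m]; ring
      have := hrel l
      have hw0 : 0 ≤ w l := hcnn (Sum.inr l)
      show B.mulVec _ l ≤ 0
      rw [hmv, hflip]
      rcases eq_or_ne l j with hl | hl
      · subst hl
        have hdiag : B l l = 0 := by have := hB' l l; linarith
        norm_num at this
        linarith
      · simp only [if_neg hl] at this
        linarith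
    · have hmv : B.mulVec (fun m => y m + (if m = j then 1 else 0)) j
          = (∑ m, B j m * y m) + B j j := by
        simp [Matrix.mulVec, dotProduct, mul_add, Finset.sum_add_distrib, mul_ite]
      have hflip : ∑ m, B j m * y m = - ∑ m, y m * B m j := by
        rw [← Finset.sum_neg_distrib]
        congr 1; ext m; rw [hB' j m]; ring
      have := hrel j
      have hw0 : 0 ≤ w j := hcnn (Sum.inr j)
      have hy0 : 0 ≤ y j := hcnn (Sum.inl j)
      simp only [hmv, hflip, if_pos rfl] at this ⊢
      norm_num at this ⊢
      linarith
  · -- c₀ not in the cone: separate by a hyperplane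
    set K : ConvexCone ℝ (EuclideanSpace ℝ (Fin k)) :=
      { carrier := S
        smul_mem' := by
          rintro t ht x ⟨c, hc, rfl⟩
          refine ⟨fun i => t * c i, fun i => mul_nonneg ht.le (hc i), ?_⟩
          rw [Finset.smul_sum]
          congr 1; ext i; rw [mul_smul]
        add_mem' := by
          rintro x ⟨c, hc, rfl⟩ x' ⟨c', hc', rfl⟩
          refine ⟨fun i => c i + c' i, fun i => add_nonneg (hc i) (hc' i), ?_⟩
          rw [← Finset.sum_add_distrib]
          congr 1; ext i; rw [add_smul] } with hK
    have hKne : (K : Set (EuclideanSpace ℝ (Fin k))).Nonempty :=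
      ⟨0, ⟨0, le_refl _, by simp⟩⟩
    have hKcl : IsClosed (K : Set (EuclideanSpace ℝ (Fin k))) := cone_isClosed v
    obtain ⟨q, hq1, hq2⟩ :=
      ProperCone.hyperplane_separation' (C := (
        { carrier := S
          add_mem' := fun ha hb => K.add_mem' ha hb
          zero_mem' := ⟨0, le_refl _, by simp⟩
          smul_mem' := by
            rintro t x ⟨c, hc, rfl⟩
            refine ⟨fun i => (t : ℝ) * c i, fun i => mul_nonneg t.2 (hc i), ?_⟩
            rw [Finset.smul_sum]
            congr 1; ext i; rw [← smul_assoc]; rfl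
          isClosed' := hKcl } : ProperCone ℝ (EuclideanSpace ℝ (Fin k)))) hmem
    have hgen : ∀ i, v i ∈ K := by
      intro i
      refine ⟨fun i' => if i' = i then 1 else 0, fun i' => by positivity, ?_⟩
      simp [ite_smul]
    have hinner : ∀ x x' : EuclideanSpace ℝ (Fin k), inner ℝ x x' = ∑ l, x l * x' l := by
      intro x x'
      simp [PiLp.inner_apply, RCLike.inner_apply, conj_trivial, mul_comm]
    have h1 : ∀ i, 0 ≤ ∑ l, B i l * q l := by
      intro i
      have := hq1 (v (Sum.inl i)) (hgen (Sum.inl i))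
      rwa [hinner] at this
    have h2 : ∀ i, q i ≤ 0 := by
      intro i
      have := hq1 (v (Sum.inr i)) (hgen (Sum.inr i))
      rw [hinner] at this
      simp only [hv, Sum.elim_inr, PiLp.toLp_apply, ite_mul, neg_mul, one_mul, zero_mul,
        Finset.sum_ite_eq', Finset.mem_univ, if_true] at this
      linarith
    have h3 : q j + ∑ l, q l * B l j < 0 := by
      have := hq2
      rw [hinner] at this
      simp only [hc₀, PiLp.toLp_apply, add_mul, ite_mul, one_mul, zero_mul, mul_add, mul_ite, mul_one, mul_zero, Finset.sum_add_distrib,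
        Finset.sum_ite_eq', Finset.mem_univ, if_true] at this
      simpa only [mul_comm] using this
    refine ⟨fun m => -(q m), ?_, ?_, ?_⟩
    · intro m
      show (0:ℝ) ≤ -(q m)
      have := h2 m; linarith
    · intro l
      show B.mulVec (fun m => -(q m)) l ≤ 0
      have hmv : B.mulVec (fun m => -(q m)) l = -∑ m, B l m * q m := by
        simp [Matrix.mulVec, dotProduct, mul_neg]
      rw [hmv]
      have := h1 l; linarith
    · have hmv : B.mulVec (fun m => -(q m)) j = -∑ m, B j m * q m := by
        simp [Matrix.mulVec, dotProduct, mul_neg]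
      have hflip : ∑ m, B j m * q m = -∑ m, q m * B m j := by
        rw [← Finset.sum_neg_distrib]
        congr 1; ext m; rw [hB' j m]; ring
      show (0:ℝ) < -(q j) - B.mulVec (fun m => -(q m)) j
      rw [hmv, hflip]
      linarith
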